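/- For all rational x with 1/2 < x ≤ 1, the height of (1/x - 1) and the height of (1 - x) are both strictly less than the height of x, where the height of a rational a/b in lowest terms is |a| + |b|. -/

import Mathlib

/-- The height of a rational number `a/b` in lowest terms is `|a| + |b|`. -/
def qheight (q : ℚ) : ℕ := q.num.natAbs + q.den

theorem interrobang_recursion_wellFounded_high (x : ℚ) (h1 : 1/2 < x) (h2 : x ≤ 1) :
    qheight (1/x - 1) < qheight x ∧ qheight (1 - x) < qheight x := by
  have hx0 : 0 < x := lt_trans (by norm_num) h1
  set a := x.num with ha
  set b := (x.den : ℤ) with hb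
  have hb0 : (0:ℤ) < b := Int.natCast_pos.mpr x.pos
  have ha0 : 0 < a := Rat.num_pos.mpr hx0
  have hxab : (a : ℚ) / b = x := Rat.num_div_den x
  -- x ≤ 1 → a ≤ b
  have hab : a ≤ b := by
    have := (div_le_one (by exact_mod_cast hb0 : (0:ℚ) < b)).mp (hxab ▸ h2)
    exact_mod_cast this
  -- 1/2 < x → b < 2a
  have hba : b < 2 * a := by
    have h1' : (1:ℚ)/2 < (a:ℚ)/b := hxab ▸ h1
    have := (div_lt_div_iff₀ (by norm_num) (by exact_mod_cast hb0 : (0:ℚ) < b)).mp h1'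
    have : (b:ℚ) < 2 * a := by linarith
    exact_mod_cast this
  have hcop : Nat.Coprime a.natAbs b.natAbs := by
    simpa [hb] using x.reduced
  have hco : IsCoprime a b := Int.isCoprime_iff_gcd_eq_one.mpr hcop
  have hco1 : IsCoprime (b - a) a := by
    have := (hco.symm.add_mul_right_left (-1))
    simpa [mul_comm, sub_eq_add_neg] using this
  have hco2 : IsCoprime (b - a) b := by
    have := hco.neg_left.add_mul_left_left 1
    simpa [sub_eq_add_neg, add_comm] using this
  have hcop1 : Nat.Coprime (b - a).natAbs a.natAbs :=
    Int.isCoprime_iff_gcd_eq_one.mp hco1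
  have hcop2 : Nat.Coprime (b - a).natAbs b.natAbs :=
    Int.isCoprime_iff_gcd_eq_one.mp hco2
  have hxne : x ≠ 0 := ne_of_gt hx0
  have e1 : 1/x - 1 = ((b - a : ℤ) : ℚ) / (a : ℚ) := by
    rw [← hxab]
    have hbQ : (b:ℚ) ≠ 0 := by exact_mod_cast hb0.ne'
    have haQ : (a:ℚ) ≠ 0 := by exact_mod_cast ha0.ne'
    field_simp
    exact (Int.cast_sub b a).symm
  have e2 : 1 - x = ((b - a : ℤ) : ℚ) / (b : ℚ) := by
    rw [← hxab]
    have hbQ : (b:ℚ) ≠ 0 := by exact_mod_cast hb0.ne'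
    field_simp
    exact (Int.cast_sub b a).symm
  have hnum1 : (1/x - 1).num = b - a := by
    rw [e1]; exact Rat.num_div_eq_of_coprime ha0 hcop1
  have hden1 : ((1/x - 1).den : ℤ) = a := by
    rw [e1]; exact Rat.den_div_eq_of_coprime ha0 hcop1
  have hnum2 : (1 - x).num = b - a := by
    rw [e2]; exact Rat.num_div_eq_of_coprime hb0 hcop2
  have hden2 : ((1 - x).den : ℤ) = b := by
    rw [e2]; exact Rat.den_div_eq_of_coprime hb0 hcop2
  have hba0 : 0 ≤ b - a := sub_nonneg.mpr hab
  have habs : (b - a).natAbs = (b - a).toNat := Int.natAbs_of_nonneg hba0 ▸ rfl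
  unfold qheight
  constructor
  · rw [hnum1]
    have : ((1/x - 1).den : ℤ) + ((b-a).natAbs : ℤ) < (a.natAbs : ℤ) + b := by
      rw [hden1, Int.natAbs_of_nonneg hba0, Int.natAbs_of_nonneg ha0.le]
      linarith
    omega
  · rw [hnum2]
    have : ((1 - x).den : ℤ) + ((b-a).natAbs : ℤ) < (a.natAbs : ℤ) + b := by
      rw [hden2, Int.natAbs_of_nonneg hba0, Int.natAbs_of_nonneg ha0.le]
      linarith
    omega
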